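/- (Corollary 1, iteration-complexity form.) Assume each f_i is convex, P is μ-strongly convex with minimizer w* and optimal value P*, the δ-similarity condition holds, and 0 < η ≤ min(1/(8nL), 1/(8n²δ)). Consider the Shuffled-SARAH trajectory (w_s, v_s)_{s≥0} defined by: for each s ≥ 0, run a SARAH epoch with step size η, permutation π_s, start point w_s and initial direction v_s, producing inner iterates w¹_s,…,wⁿ_s and output w_{s+1}, and set v_{s+1} = (1/n)·Σ_{i=1}^{n} ∇f_{π_s(i)}(wⁱ_s). Let Φ₁ = P(w_1) − P* + (η(n+1)/16)·‖v_0‖² and fix ε > 0 with Φ₁ > 0. Then for every integer S ≥ 1 + (2/(η·μ·(n+1)))·max(0, log(Φ₁/ε)), it holds that P(w_S) − P* ≤ ε. -/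

import Mathlib

open scoped BigOperators


-- ===== b.lean =====
open scoped BigOperators RealInnerProductSpace


set_option maxHeartbeats 4000000

variable {d n : ℕ}

local notation "E" => EuclideanSpace ℝ (Fin d)

lemma fderiv_apply_eq_inner_gradient (F : E → ℝ) (hF : Differentiable ℝ F) (x y : E) :
    fderiv ℝ F x y = ⟪gradient F x, y⟫ := by
  have h := (hF x).hasGradientAt.hasFDerivAt
  rw [h.fderiv, InnerProductSpace.toDual_apply_apply]

lemma gradient_avg_sum (f : Fin n → E → ℝ) (P : E → ℝ)
    (hP : ∀ w, P w = (1 / (n : ℝ)) * ∑ i, f i w)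
    (hdiff : ∀ i, Differentiable ℝ (f i)) (x : E) :
    HasGradientAt P ((1 / (n : ℝ)) • ∑ i, gradient (f i) x) x := by
  rw [hasGradientAt_iff_hasFDerivAt]
  have h1 : HasFDerivAt (fun w => ∑ i, f i w)
      (∑ i, (InnerProductSpace.toDual ℝ E) (gradient (f i) x)) x :=
    HasFDerivAt.fun_sum (fun i _ => ((hdiff i) x).hasGradientAt.hasFDerivAt)
  have h2 := h1.const_mul (1 / (n : ℝ))
  have : P = fun w => (1 / (n : ℝ)) * ∑ i, f i w := funext hP
  rw [this]
  refine h2.congr_fderiv ?_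
  rw [map_smul, map_sum]

lemma P_diff (f : Fin n → E → ℝ) (P : E → ℝ)
    (hP : ∀ w, P w = (1 / (n : ℝ)) * ∑ i, f i w)
    (hdiff : ∀ i, Differentiable ℝ (f i)) : Differentiable ℝ P :=
  fun x => ((gradient_avg_sum f P hP hdiff x).differentiableAt)

lemma gradP_lip (hn : 1 ≤ n) (f : Fin n → E → ℝ) (P : E → ℝ)
    (hP : ∀ w, P w = (1 / (n : ℝ)) * ∑ i, f i w)
    (hdiff : ∀ i, Differentiable ℝ (f i)) (L : ℝ)
    (hLip : ∀ i w₁ w₂, ‖gradient (f i) w₁ - gradient (f i) w₂‖ ≤ L * ‖w₁ - w₂‖)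
    (x y : E) : ‖gradient P x - gradient P y‖ ≤ L * ‖x - y‖ := by
  have hx := (gradient_avg_sum f P hP hdiff x).gradient
  have hy := (gradient_avg_sum f P hP hdiff y).gradient
  rw [hx, hy, ← smul_sub, ← Finset.sum_sub_distrib, norm_smul]
  have h1 : ‖∑ i, (gradient (f i) x - gradient (f i) y)‖ ≤ (n : ℝ) * (L * ‖x - y‖) := by
    calc ‖∑ i, (gradient (f i) x - gradient (f i) y)‖
        ≤ ∑ _i : Fin n, (L * ‖x - y‖) := norm_sum_le_of_le _ (fun i _ => hLip i x y)
      _ = (n : ℝ) * (L * ‖x - y‖) := by simp [Finset.sum_const, mul_comm]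
  have hn0 : (0 : ℝ) < (n : ℝ) := by exact_mod_cast hn
  have hcoef : ‖(1 : ℝ) / (n : ℝ)‖ = 1 / (n : ℝ) := by
    rw [Real.norm_eq_abs, abs_of_pos (by positivity)]
  rw [hcoef]
  calc 1 / (n : ℝ) * ‖∑ i, (gradient (f i) x - gradient (f i) y)‖
      ≤ 1 / (n : ℝ) * ((n : ℝ) * (L * ‖x - y‖)) :=
        mul_le_mul_of_nonneg_left h1 (by positivity)
    _ = L * ‖x - y‖ := by field_simp

-- ===== c.lean =====





-- descent lemma with lossy constant L (instead of L/2)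
lemma descent_lemma (P : E → ℝ) (hPd : Differentiable ℝ P) (L : ℝ) (hL : 0 ≤ L)
    (hPl : ∀ x y : E, ‖gradient P x - gradient P y‖ ≤ L * ‖x - y‖) (x y : E) :
    P y ≤ P x + ⟪gradient P x, y - x⟫ + L * ‖y - x‖ ^ 2 := by
  set h : E → ℝ := fun z => P z - ⟪gradient P x, z⟫ with hh
  have hlin : ∀ z : E, HasFDerivAt (fun w : E => ⟪gradient P x, w⟫)
      ((InnerProductSpace.toDual ℝ E) (gradient P x)) z := by
    intro z
    exact ((InnerProductSpace.toDual ℝ E) (gradient P x)).hasFDerivAt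
  have hd : ∀ z : E, HasFDerivAt h
      ((InnerProductSpace.toDual ℝ E) (gradient P z) - (InnerProductSpace.toDual ℝ E) (gradient P x)) z := by
    intro z
    exact ((hPd z).hasGradientAt.hasFDerivAt).sub (hlin z)
  have key : ‖h y - h x‖ ≤ (L * ‖y - x‖) * ‖y - x‖ := by
    apply Convex.norm_image_sub_le_of_norm_fderiv_le
      (fun z _ => (hd z).differentiableAt) _ (convex_segment x y)
      (left_mem_segment ℝ x y) (right_mem_segment ℝ x y)
    intro z hz
    rw [(hd z).fderiv]
    have : ‖(InnerProductSpace.toDual ℝ E) (gradient P z) - (InnerProductSpace.toDual ℝ E) (gradient P x)‖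
        = ‖gradient P z - gradient P x‖ := by
      rw [← map_sub]
      exact (InnerProductSpace.toDual ℝ E).norm_map _
    rw [this]
    refine (hPl z x).trans ?_
    apply mul_le_mul_of_nonneg_left _ hL
    -- ‖z - x‖ ≤ ‖y - x‖ for z in segment
    obtain ⟨a, b, ha, hb, hab, rfl⟩ := hz
    have : a • x + b • y - x = b • (y - x) := by
      rw [smul_sub]
      rw [show a • x + b • y - x = b • y - (1 - a) • x by module]
      rw [show (1 : ℝ) - a = b by linarith]
    rw [this, norm_smul, Real.norm_eq_abs, abs_of_nonneg hb]
    nlinarith [norm_nonneg (y - x)]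
  have hiner : h y - h x = P y - P x - ⟪gradient P x, y - x⟫ := by
    simp only [hh, inner_sub_right]
    ring
  rw [hiner] at key
  have := (abs_le.mp (by rwa [Real.norm_eq_abs] at key)).2
  nlinarith [this]

-- ===== e.lean =====





lemma sc_first_order (P : E → ℝ) (hPd : Differentiable ℝ P) (μ : ℝ)
    (hsc : StrongConvexOn Set.univ μ P) (x y : E) :
    P x + ⟪gradient P x, y - x⟫ + (μ / 2) * ‖y - x‖ ^ 2 ≤ P y := by
  set u : E := y - x with hu
  have hg : ConvexOn ℝ Set.univ (fun z : E => P z - μ / 2 * ‖z‖ ^ 2) :=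
    strongConvexOn_iff_convex.mp hsc
  -- restrict to the line t ↦ x + t • u
  set c : ℝ → E := fun t => t • u + x with hc
  have hcd : ∀ t : ℝ, HasDerivAt c u t := by
    intro t
    simpa [hc] using ((hasDerivAt_id t).smul_const u).add_const x
  set φ : ℝ → ℝ := fun t => P (c t) - μ / 2 * ‖c t‖ ^ 2 with hφ
  have hφconv : ConvexOn ℝ Set.univ φ := by
    have := hg.comp_affineMap (AffineMap.lineMap x y : ℝ →ᵃ[ℝ] E)
    have heq : (fun z : E => P z - μ / 2 * ‖z‖ ^ 2) ∘ (AffineMap.lineMap x y : ℝ →ᵃ[ℝ] E) = φ := by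
      funext t
      simp [AffineMap.lineMap_apply, hφ, hc, hu, vsub_eq_sub, vadd_eq_add]
    rw [heq] at this
    simpa using this
  have hPc : ∀ t : ℝ, HasDerivAt (fun s => P (c s)) ⟪gradient P (c t), u⟫ t := by
    intro t
    have h1 := ((hPd (c t)).hasGradientAt.hasFDerivAt).comp_hasDerivAt t (hcd t)
    rw [InnerProductSpace.toDual_apply_apply] at h1
    exact h1
  have hnc : ∀ t : ℝ, HasDerivAt (fun s => ‖c s‖ ^ 2) (2 * ⟪c t, u⟫) t := by
    intro t
    have h1 := HasDerivAt.inner ℝ (hcd t) (hcd t)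
    have heq : (fun s : ℝ => ⟪c s, c s⟫) = fun s => ‖c s‖ ^ 2 := by
      funext s; rw [real_inner_self_eq_norm_sq]
    rw [heq] at h1
    refine h1.congr_deriv ?_
    rw [real_inner_comm]
    ring
  have hφd : HasDerivAt φ (⟪gradient P x, u⟫ - μ * ⟪x, u⟫) 0 := by
    have := (hPc 0).sub (((hnc 0).const_mul (μ / 2)))
    have hc0 : c 0 = x := by simp [hc]
    rw [hc0] at this
    refine this.congr_deriv ?_
    ring
  have hslope := hφconv.deriv_le_slope (Set.mem_univ (0:ℝ)) (Set.mem_univ (1:ℝ))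
    one_pos hφd.differentiableAt
  rw [hφd.deriv] at hslope
  have hsl : slope φ 0 1 = φ 1 - φ 0 := by
    simp [slope_def_field]
  rw [hsl] at hslope
  have hc1 : c 1 = y := by simp [hc, hu]
  have hc0 : c 0 = x := by simp [hc]
  simp only [hφ, hc1, hc0] at hslope
  have hexp : ‖y‖ ^ 2 = ‖x‖ ^ 2 + 2 * ⟪x, u⟫ + ‖u‖ ^ 2 := by
    rw [show y = x + u by rw [hu]; abel]
    exact norm_add_sq_real x u
  have hexp2 : μ / 2 * ‖y‖ ^ 2 = μ / 2 * ‖x‖ ^ 2 + μ * ⟪x, u⟫ + μ / 2 * ‖u‖ ^ 2 := by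
    rw [hexp]; ring
  linarith [hslope, hexp2]

lemma PL_ineq (P : E → ℝ) (hPd : Differentiable ℝ P) (μ : ℝ) (hμ : 0 < μ)
    (hsc : StrongConvexOn Set.univ μ P) (wstar : E) (hmin : IsMinOn P Set.univ wstar) (x : E) :
    2 * μ * (P x - P wstar) ≤ ‖gradient P x‖ ^ 2 := by
  have h := sc_first_order P hPd μ hsc x wstar
  have hcs : ⟪gradient P x, wstar - x⟫ ≥ -(‖gradient P x‖ * ‖wstar - x‖) := by
    have := abs_real_inner_le_norm (gradient P x) (wstar - x)
    have := abs_le.mp this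
    linarith [this.1]
  nlinarith [h, hcs, sq_nonneg (μ * ‖wstar - x‖ - ‖gradient P x‖), norm_nonneg (wstar - x), norm_nonneg (gradient P x)]

lemma mu_le_L (hd : 1 ≤ d) (P : E → ℝ) (hPd : Differentiable ℝ P) (μ L : ℝ) (hμ : 0 < μ)
    (hsc : StrongConvexOn Set.univ μ P)
    (hPl : ∀ x y : E, ‖gradient P x - gradient P y‖ ≤ L * ‖x - y‖) : μ ≤ L := by
  set e : E := EuclideanSpace.single (⟨0, hd⟩ : Fin d) (1 : ℝ) with he
  have hne : ‖e‖ = 1 := by simp [he]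
  have h1 := sc_first_order P hPd μ hsc 0 e
  have h2 := sc_first_order P hPd μ hsc e 0
  simp only [sub_zero] at h1
  simp only [zero_sub, inner_neg_right, norm_neg] at h2
  rw [hne] at h1 h2
  have h3 : ⟪gradient P e - gradient P 0, e⟫ ≥ μ := by
    rw [inner_sub_left]
    nlinarith [h1, h2]
  have h4 : ⟪gradient P e - gradient P 0, e⟫ ≤ L := by
    have := abs_real_inner_le_norm (gradient P e - gradient P 0) e
    have h5 := (abs_le.mp this).2
    have h6 := hPl e 0
    rw [hne] at h5
    have : (e : E) - 0 = e := by simp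
    rw [this, hne] at h6
    nlinarith [norm_nonneg (gradient P e - gradient P 0)]
  linarith

-- ===== g.lean =====



lemma pow_one_sub_le' (x : ℝ) (m : ℕ) (h0 : 0 ≤ x) (h1 : (m : ℝ) * x ≤ 1) :
    (1 - x) ^ m ≤ 1 - (m : ℝ) * x / 2 := by
  induction m with
  | zero => norm_num
  | succ k ih =>
    have h1' : ((k : ℝ) + 1) * x ≤ 1 := by push_cast at h1; linarith
    have hk : (k : ℝ) * x ≤ 1 := by nlinarith
    have hx1 : x ≤ 1 := by nlinarith [Nat.cast_nonneg (α := ℝ) k]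
    have ihh := ih hk
    have h1x : (0:ℝ) ≤ 1 - x := by linarith
    calc (1 - x) ^ (k+1) = (1 - x) ^ k * (1 - x) := by ring
      _ ≤ (1 - (k:ℝ) * x / 2) * (1 - x) := by nlinarith [pow_nonneg h1x k]
      _ ≤ 1 - ((k:ℝ)+1) * x / 2 := by nlinarith
      _ = 1 - ((k+1 : ℕ) : ℝ) * x / 2 := by push_cast; ring

lemma pow_one_sub_ge (x : ℝ) (m : ℕ) (h1 : x ≤ 1) :
    1 - (m : ℝ) * x ≤ (1 - x) ^ m := by
  have := one_add_mul_le_pow (a := -x) (by linarith) m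
  calc 1 - (m:ℝ) * x = 1 + (m:ℝ) * (-x) := by ring
    _ ≤ (1 + -x) ^ m := this
    _ = (1 - x) ^ m := by ring_nf

lemma numA (η L D : ℝ) (hη0 : 0 < η) (hD : 0 ≤ D) (hηL8 : η * L ≤ 1 / 8) :
    (21 / 64) * η * D ≤ (7 / 8) * ((η / 2) * (1 - 2 * η * L) * D) := by
  nlinarith [mul_le_mul_of_nonneg_right hηL8 (mul_nonneg (le_of_lt hη0) hD),
    mul_nonneg (le_of_lt hη0) hD]




-- The main within-epoch descent estimate.
lemma epoch_bound (hn : 1 ≤ n)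
    (f : Fin n → E → ℝ) (P : E → ℝ) (Pstar : ℝ)
    (L μ δ η : ℝ) (hL : 0 < L) (hμ : 0 < μ) (hδ : 0 < δ) (hη0 : 0 < η)
    (hμL : μ ≤ L)
    (hηL : η * L * (n : ℝ) ≤ 1 / 8) (hηδ : η * δ * (n : ℝ) ^ 2 ≤ 1 / 8)
    (hPd : Differentiable ℝ P)
    (hdesc : ∀ x y : E, P y ≤ P x + ⟪gradient P x, y - x⟫ + L * ‖y - x‖ ^ 2)
    (hPL : ∀ x : E, 2 * μ * (P x - Pstar) ≤ ‖gradient P x‖ ^ 2)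
    (hPmin : ∀ x : E, Pstar ≤ P x)
    (hsim : ∀ (i : Fin n) (w₁ w₂ : E),
      ‖(gradient (f i) w₁ - gradient P w₁) - (gradient (f i) w₂ - gradient P w₂)‖
        ≤ (δ / 2) * ‖w₁ - w₂‖)
    (x v : ℕ → E) (σ : Fin n → Fin n)
    (hx : ∀ t, t ≤ n → x (t + 1) = x t - η • v t)
    (hv : ∀ (t : ℕ) (h : t < n), v (t + 1)
      = v t + gradient (f (σ ⟨t, h⟩)) (x (t + 1)) - gradient (f (σ ⟨t, h⟩)) (x t))
    (E0 : ℝ) (hE0 : ‖v 0 - gradient P (x 0)‖ ^ 2 ≤ E0) :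
    P (x (n + 1)) - Pstar ≤ (1 - η * μ * ((n : ℝ) + 1) / 2) * (P (x 0) - Pstar)
      + (4 / 7) * η * ((n : ℝ) + 1) * E0
      - (19 / 64) * η * ∑ t ∈ Finset.range (n + 1), ‖v t‖ ^ 2 := by
  have hn0 : (0 : ℝ) < (n : ℝ) := by exact_mod_cast hn
  have hn1 : (1 : ℝ) ≤ (n : ℝ) := by exact_mod_cast hn
  have hημn : η * μ * (n : ℝ) ≤ 1 / 8 := by
    have h1 : η * μ ≤ η * L := mul_le_mul_of_nonneg_left hμL (le_of_lt hη0)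
    have h2 := mul_le_mul_of_nonneg_right h1 (le_of_lt hn0)
    linarith
  have hημ : η * μ ≤ 1 / (8 * (n : ℝ)) := by
    rw [le_div_iff₀ (by positivity)]
    nlinarith
  have hημ1 : η * μ ≤ 1 / 8 := by nlinarith
  have hημ0 : 0 ≤ η * μ := by positivity
  have h1ημ : 0 ≤ 1 - η * μ := by linarith
  -- abbreviations
  set D : ℝ := ∑ t ∈ Finset.range (n + 1), ‖v t‖ ^ 2 with hD
  set A : ℕ → ℝ := fun t => (η / 2) * (1 - 2 * η * L) * ‖v t‖ ^ 2 with hA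
  set B : ℕ → ℝ := fun t => (η / 2) * ‖v t - gradient P (x t)‖ ^ 2 with hB
  have hAnn : ∀ t, 0 ≤ A t := by
    intro t
    have : 2 * η * L ≤ 1 / 4 := by nlinarith
    have h2 : 0 ≤ 1 - 2 * η * L := by linarith
    positivity
  have hBnn : ∀ t, 0 ≤ B t := by intro t; positivity
  -- one-step descent
  have hstep : ∀ t, t ≤ n → P (x (t + 1)) - Pstar
      ≤ (1 - η * μ) * (P (x t) - Pstar) - A t + B t := by
    intro t ht
    have hd := hdesc (x t) (x (t + 1))
    rw [hx t ht] at hd ⊢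
    have hxx : x t - η • v t - x t = -(η • v t) := by abel
    rw [hxx] at hd
    rw [inner_neg_right, norm_neg, norm_smul, Real.norm_eq_abs, abs_of_pos hη0] at hd
    rw [real_inner_smul_right] at hd
    have hinner : 2 * ⟪gradient P (x t), v t⟫
        = ‖gradient P (x t)‖ ^ 2 + ‖v t‖ ^ 2 - ‖v t - gradient P (x t)‖ ^ 2 := by
      rw [norm_sub_sq_real, real_inner_comm]
      ring
    have hinner2 : η * ⟪gradient P (x t), v t⟫
        = η / 2 * ‖gradient P (x t)‖ ^ 2 + η / 2 * ‖v t‖ ^ 2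
          - η / 2 * ‖v t - gradient P (x t)‖ ^ 2 := by
      linear_combination (η / 2) * hinner
    have hpl2 := mul_le_mul_of_nonneg_left (hPL (x t)) (le_of_lt (half_pos hη0))
    simp only [hA, hB]
    nlinarith [hd, hinner2, hpl2]
  -- exact unrolling
  have hunroll : ∀ T, T ≤ n + 1 → P (x T) - Pstar
      ≤ (1 - η * μ) ^ T * (P (x 0) - Pstar)
        + ∑ j ∈ Finset.range T, (1 - η * μ) ^ (T - 1 - j) * (B j - A j) := by
    intro T
    induction T with
    | zero => intro _; simp
    | succ T ih =>
      intro hT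
      have hT' : T ≤ n := by omega
      have hTn : T ≤ n + 1 := by omega
      have h1 := hstep T hT'
      have h2 := ih hTn
      have h3 : P (x (T + 1)) - Pstar
          ≤ (1 - η * μ) * ((1 - η * μ) ^ T * (P (x 0) - Pstar)
            + ∑ j ∈ Finset.range T, (1 - η * μ) ^ (T - 1 - j) * (B j - A j)) - A T + B T := by
        have := mul_le_mul_of_nonneg_left h2 h1ημ
        linarith
      refine h3.trans ?_
      rw [Finset.sum_range_succ]
      have hlast : (T + 1 - 1 - T) = 0 := by omega
      rw [hlast, pow_zero, one_mul]
      rw [mul_add, Finset.mul_sum]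
      have hsum : ∀ j ∈ Finset.range T,
          (1 - η * μ) * ((1 - η * μ) ^ (T - 1 - j) * (B j - A j))
            = (1 - η * μ) ^ (T + 1 - 1 - j) * (B j - A j) := by
        intro j hj
        have hj' : j < T := Finset.mem_range.mp hj
        have : T + 1 - 1 - j = (T - 1 - j) + 1 := by omega
        rw [this, pow_succ]
        ring
      rw [Finset.sum_congr rfl hsum]
      have hpow : (1 - η * μ) * ((1 - η * μ) ^ T * (P (x 0) - Pstar))
          = (1 - η * μ) ^ (T + 1) * (P (x 0) - Pstar) := by ring
      linarith [hpow]
  have hfinal := hunroll (n + 1) (le_refl _)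
  -- bound the weighted sum
  have hwsum : ∑ j ∈ Finset.range (n + 1), (1 - η * μ) ^ (n + 1 - 1 - j) * (B j - A j)
      ≤ ∑ j ∈ Finset.range (n + 1), B j - (7 / 8) * ∑ j ∈ Finset.range (n + 1), A j := by
    have hsplit : ∀ j ∈ Finset.range (n + 1),
        (1 - η * μ) ^ (n + 1 - 1 - j) * (B j - A j) ≤ B j - (7 / 8) * A j := by
      intro j hj
      have hw1 : (1 - η * μ) ^ (n + 1 - 1 - j) ≤ 1 :=
        pow_le_one₀ h1ημ (by linarith)
      have hw2 : (7 / 8 : ℝ) ≤ (1 - η * μ) ^ (n + 1 - 1 - j) := by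
        have hle : (1 - η * μ) ^ (n + 1 - 1 - j) ≥ (1 - η * μ) ^ n := by
          apply pow_le_pow_of_le_one h1ημ (by linarith)
          omega
        have hber := pow_one_sub_ge (η * μ) n (by linarith)
        have hnμ : (n : ℝ) * (η * μ) ≤ 1 / 8 := by
          calc (n : ℝ) * (η * μ) ≤ (n : ℝ) * (1 / (8 * (n : ℝ))) :=
            mul_le_mul_of_nonneg_left hημ (by positivity)
          _ = 1 / 8 := by field_simp
        linarith
      nlinarith [hAnn j, hBnn j]
    calc ∑ j ∈ Finset.range (n + 1), (1 - η * μ) ^ (n + 1 - 1 - j) * (B j - A j)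
        ≤ ∑ j ∈ Finset.range (n + 1), (B j - (7 / 8) * A j) := Finset.sum_le_sum hsplit
      _ = ∑ j ∈ Finset.range (n + 1), B j - (7 / 8) * ∑ j ∈ Finset.range (n + 1), A j := by
          rw [Finset.sum_sub_distrib, Finset.mul_sum]
  -- the error recursion
  have herr : ∀ t, t ≤ n → ‖v t - gradient P (x t)‖
      ≤ ‖v 0 - gradient P (x 0)‖ + (δ * η / 2) * ∑ j ∈ Finset.range t, ‖v j‖ := by
    intro t
    induction t with
    | zero => intro _; simp
    | succ t ih =>
      intro ht
      have ht' : t < n := by omega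
      have htn : t ≤ n := by omega
      have h1 := ih htn
      have hvrec := hv t ht'
      have hkey : v (t+1) - gradient P (x (t+1))
          = (v t - gradient P (x t))
            + ((gradient (f (σ ⟨t, ht'⟩)) (x (t+1)) - gradient P (x (t+1)))
              - (gradient (f (σ ⟨t, ht'⟩)) (x t) - gradient P (x t))) := by
        rw [hvrec]; abel
      rw [hkey]
      refine (norm_add_le _ _).trans ?_
      have hs := hsim (σ ⟨t, ht'⟩) (x (t+1)) (x t)
      have hxd : x (t+1) - x t = -(η • v t) := by rw [hx t htn]; abel
      rw [hxd, norm_neg, norm_smul, Real.norm_eq_abs, abs_of_pos hη0] at hs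
      rw [Finset.sum_range_succ]
      have : (δ / 2) * (η * ‖v t‖) = (δ * η / 2) * ‖v t‖ := by ring
      rw [this] at hs
      have hδη : 0 ≤ δ * η / 2 := by positivity
      calc ‖v t - gradient P (x t)‖ + _ ≤
          (‖v 0 - gradient P (x 0)‖ + (δ * η / 2) * ∑ j ∈ Finset.range t, ‖v j‖)
            + (δ * η / 2) * ‖v t‖ := add_le_add h1 hs
        _ = ‖v 0 - gradient P (x 0)‖ + (δ * η / 2) * (∑ j ∈ Finset.range t, ‖v j‖ + ‖v t‖) := by ring
  -- bound on B j
  have hDnn : 0 ≤ D := by apply Finset.sum_nonneg; intro t _; positivity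
  have hBbound : ∀ t, t ≤ n → B t ≤ (η / 2) * ((8 / 7) * E0 + 2 * δ ^ 2 * η ^ 2 * (n : ℝ) * D) := by
    intro t ht
    have h1 := herr t ht
    have hS : (∑ j ∈ Finset.range t, ‖v j‖) ^ 2 ≤ (n : ℝ) * D := by
      have hcs := sq_sum_le_card_mul_sum_sq (s := Finset.range t) (f := fun j => ‖v j‖)
      simp only [Finset.card_range] at hcs
      have hsub : ∑ j ∈ Finset.range t, ‖v j‖ ^ 2 ≤ D := by
        apply Finset.sum_le_sum_of_subset_of_nonneg
        · apply Finset.range_subset_range.mpr; omega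
        · intro j _ _; positivity
      have ht' : (t : ℝ) ≤ (n : ℝ) := by exact_mod_cast ht
      calc (∑ j ∈ Finset.range t, ‖v j‖) ^ 2 ≤ (t : ℝ) * ∑ j ∈ Finset.range t, ‖v j‖ ^ 2 := hcs
        _ ≤ (n : ℝ) * D := by
          apply mul_le_mul ht' hsub (Finset.sum_nonneg (fun j _ => by positivity)) (le_of_lt hn0)
    have he2 : ‖v t - gradient P (x t)‖ ^ 2
        ≤ (8 / 7) * ‖v 0 - gradient P (x 0)‖ ^ 2
          + 8 * (δ * η / 2) ^ 2 * (∑ j ∈ Finset.range t, ‖v j‖) ^ 2 := by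
      have hnn1 : 0 ≤ ‖v t - gradient P (x t)‖ := norm_nonneg _
      have hnn2 : 0 ≤ ‖v 0 - gradient P (x 0)‖ := norm_nonneg _
      have hnn3 : 0 ≤ (δ * η / 2) * ∑ j ∈ Finset.range t, ‖v j‖ := by
        apply mul_nonneg (by positivity) (Finset.sum_nonneg (fun j _ => norm_nonneg _))
      nlinarith [h1, sq_nonneg (‖v 0 - gradient P (x 0)‖ - 7 * ((δ * η / 2) * ∑ j ∈ Finset.range t, ‖v j‖))]
    have h8 : 8 * (δ * η / 2) ^ 2 * (∑ j ∈ Finset.range t, ‖v j‖) ^ 2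
        ≤ 2 * δ ^ 2 * η ^ 2 * (n : ℝ) * D := by
      have : 8 * (δ * η / 2) ^ 2 = 2 * δ ^ 2 * η ^ 2 := by ring
      rw [this]
      have h2 : 0 ≤ 2 * δ ^ 2 * η ^ 2 := by positivity
      nlinarith [hS]
    have hcomb : ‖v t - gradient P (x t)‖ ^ 2
        ≤ (8 / 7) * E0 + 2 * δ ^ 2 * η ^ 2 * (n : ℝ) * D := by nlinarith [he2, h8, hE0]
    simp only [hB]
    exact mul_le_mul_of_nonneg_left hcomb (le_of_lt (half_pos hη0))
  -- sum of the B's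
  have h64 : η ^ 2 * δ ^ 2 * (n : ℝ) ^ 4 ≤ 1 / 64 := by
    nlinarith [hηδ, mul_nonneg (mul_nonneg (le_of_lt hη0) (le_of_lt hδ)) (sq_nonneg (n : ℝ))]
  have hnn4 : ((n : ℝ) + 1) * (n : ℝ) ≤ 2 * (n : ℝ) ^ 4 := by
    have h2 : (n : ℝ) ^ 2 ≤ (n : ℝ) ^ 4 := pow_le_pow_right₀ hn1 (by norm_num)
    have h3 : (n : ℝ) ^ 1 ≤ (n : ℝ) ^ 4 := pow_le_pow_right₀ hn1 (by norm_num)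
    simp only [pow_one] at h3
    nlinarith [h2, h3]
  have hcoef : ((n : ℝ) + 1) * (n : ℝ) * δ ^ 2 * η ^ 2 ≤ 1 / 32 := by
    have hstep2 := mul_le_mul_of_nonneg_right hnn4 (show (0:ℝ) ≤ δ ^ 2 * η ^ 2 by positivity)
    nlinarith [hstep2, h64]
  have hBsum : ∑ j ∈ Finset.range (n + 1), B j
      ≤ (4 / 7) * η * ((n : ℝ) + 1) * E0 + (η / 32) * D := by
    have h1 : ∑ j ∈ Finset.range (n + 1), B j
        ≤ ∑ _j ∈ Finset.range (n + 1), (η / 2) * ((8 / 7) * E0 + 2 * δ ^ 2 * η ^ 2 * (n : ℝ) * D) := by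
      apply Finset.sum_le_sum
      intro j hj
      exact hBbound j (by have := Finset.mem_range.mp hj; omega)
    rw [Finset.sum_const, Finset.card_range] at h1
    have hcard : ((n + 1 : ℕ) : ℝ) = (n : ℝ) + 1 := by push_cast; ring
    have h2 : (n + 1 : ℕ) • ((η / 2) * ((8 / 7) * E0 + 2 * δ ^ 2 * η ^ 2 * (n : ℝ) * D))
        = ((n : ℝ) + 1) * ((η / 2) * ((8 / 7) * E0 + 2 * δ ^ 2 * η ^ 2 * (n : ℝ) * D)) := by
      rw [nsmul_eq_mul, hcard]
    rw [h2] at h1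
    have h3 : ((n : ℝ) + 1) * ((η / 2) * (2 * δ ^ 2 * η ^ 2 * (n : ℝ) * D)) ≤ (η / 32) * D := by
      have := mul_le_mul_of_nonneg_right hcoef (mul_nonneg (le_of_lt hη0) hDnn)
      nlinarith [this]
    nlinarith [h1, h3]
  -- sum of the A's
  have hAsum : ∑ j ∈ Finset.range (n + 1), A j = (η / 2) * (1 - 2 * η * L) * D := by
    simp only [hA, hD]
    rw [Finset.mul_sum]
  have hηL1 : 2 * η * L ≤ 1 / 4 := by
    have h1 : η * L * 1 ≤ η * L * (n : ℝ) :=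
      mul_le_mul_of_nonneg_left hn1 (by positivity)
    linarith
  have hA78 : (21 / 64) * η * D ≤ (7 / 8) * ∑ j ∈ Finset.range (n + 1), A j := by
    rw [hAsum]
    exact numA η L D hη0 hDnn (by linarith)
  -- contraction of the leading coefficient
  have hp0 : 0 ≤ P (x 0) - Pstar := by linarith [hPmin (x 0)]
  have hpow1 : (1 - η * μ) ^ (n + 1) ≤ 1 - η * μ * ((n : ℝ) + 1) / 2 := by
    have h1 : ((n + 1 : ℕ) : ℝ) * (η * μ) ≤ 1 := by
      have : ((n + 1 : ℕ) : ℝ) = (n : ℝ) + 1 := by push_cast; ring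
      rw [this]
      nlinarith [hημn]
    have := pow_one_sub_le' (η * μ) (n + 1) hημ0 h1
    have hc : ((n + 1 : ℕ) : ℝ) = (n : ℝ) + 1 := by push_cast; ring
    rw [hc] at this
    linarith
  have hlead : (1 - η * μ) ^ (n + 1) * (P (x 0) - Pstar)
      ≤ (1 - η * μ * ((n : ℝ) + 1) / 2) * (P (x 0) - Pstar) :=
    mul_le_mul_of_nonneg_right hpow1 hp0
  linarith [hfinal, hwsum, hBsum, hA78, hlead]

-- ===== h.lean =====






lemma telescope_x (η : ℝ) (x v : ℕ → E)
    (hx : ∀ t, t ≤ n → x (t + 1) = x t - η • v t) :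
    ∀ k, k ≤ n + 1 → x 0 - x k = η • ∑ j ∈ Finset.range k, v j := by
  intro k
  induction k with
  | zero => intro _; simp
  | succ k ih =>
    intro hk
    have hk' : k ≤ n := by omega
    rw [hx k hk', Finset.sum_range_succ, smul_add]
    have := ih (by omega)
    rw [← this]
    abel

lemma tail_dist (η : ℝ) (x v : ℕ → E)
    (hx : ∀ t, t ≤ n → x (t + 1) = x t - η • v t)
    (k : ℕ) (hk : k ≤ n + 1) :
    x k - x (n + 1) = η • ∑ j ∈ Finset.Ico k (n + 1), v j := by
  have h1 := telescope_x η x v hx k hk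
  have h2 := telescope_x η x v hx (n + 1) (le_refl _)
  have h3 : x k - x (n + 1) = (x 0 - x (n + 1)) - (x 0 - x k) := by abel
  rw [h3, h1, h2, ← smul_sub, Finset.sum_Ico_eq_sub _ hk]

lemma epoch_next_error (hn : 1 ≤ n)
    (f : Fin n → E → ℝ) (P : E → ℝ)
    (L δ η : ℝ) (hL : 0 < L) (hδ : 0 < δ) (hη0 : 0 < η)
    (hηL : η * L * (n : ℝ) ≤ 1 / 8) (hηδ : η * δ * (n : ℝ) ^ 2 ≤ 1 / 8)
    (hPl : ∀ x y : E, ‖gradient P x - gradient P y‖ ≤ L * ‖x - y‖)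
    (hgradPsum : ∀ y : E, ∑ i, gradient (f i) y = (n : ℝ) • gradient P y)
    (hsim : ∀ (i : Fin n) (w₁ w₂ : E),
      ‖(gradient (f i) w₁ - gradient P w₁) - (gradient (f i) w₂ - gradient P w₂)‖
        ≤ (δ / 2) * ‖w₁ - w₂‖)
    (x v : ℕ → E) (σ : Equiv.Perm (Fin n))
    (hx : ∀ t, t ≤ n → x (t + 1) = x t - η • v t)
    (g' : E) (hg' : g' = (1 / (n : ℝ)) • ∑ i : Fin n, gradient (f (σ i)) (x ((i : ℕ) + 1))) :
    ‖g' - gradient P (x (n + 1))‖ ^ 2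
      ≤ (9 / (256 * (n : ℝ))) * ∑ t ∈ Finset.range (n + 1), ‖v t‖ ^ 2 := by
  have hn0 : (0 : ℝ) < (n : ℝ) := by exact_mod_cast hn
  have hn1 : (1 : ℝ) ≤ (n : ℝ) := by exact_mod_cast hn
  set D : ℝ := ∑ t ∈ Finset.range (n + 1), ‖v t‖ ^ 2 with hD
  set S : ℝ := ∑ j ∈ Finset.Ico 1 (n + 1), ‖v j‖ with hS
  have hSnn : 0 ≤ S := Finset.sum_nonneg (fun j _ => norm_nonneg _)
  have hDnn : 0 ≤ D := Finset.sum_nonneg (fun t _ => by positivity)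
  -- Cauchy-Schwarz
  have hS2 : S ^ 2 ≤ (n : ℝ) * D := by
    have hcs := sq_sum_le_card_mul_sum_sq (s := Finset.Ico 1 (n + 1)) (f := fun j => ‖v j‖)
    have hcard : (Finset.Ico 1 (n + 1)).card = n := by
      rw [Nat.card_Ico]; omega
    rw [hcard] at hcs
    have hsub : ∑ j ∈ Finset.Ico 1 (n + 1), ‖v j‖ ^ 2 ≤ D := by
      apply Finset.sum_le_sum_of_subset_of_nonneg
      · intro j hj
        rw [Finset.mem_Ico] at hj
        exact Finset.mem_range.mpr hj.2
      · intro j _ _; positivity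
    calc S ^ 2 ≤ (n : ℝ) * ∑ j ∈ Finset.Ico 1 (n + 1), ‖v j‖ ^ 2 := by exact_mod_cast hcs
      _ ≤ (n : ℝ) * D := by nlinarith [hsub]
  -- distance bound for the inner points
  have hdist : ∀ i : Fin n, ‖x ((i : ℕ) + 1) - x (n + 1)‖ ≤ η * S := by
    intro i
    have hile : (i : ℕ) + 1 ≤ n + 1 := by omega
    rw [tail_dist η x v hx ((i : ℕ) + 1) hile, norm_smul, Real.norm_eq_abs, abs_of_pos hη0]
    have h1 : ‖∑ j ∈ Finset.Ico ((i : ℕ) + 1) (n + 1), v j‖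
        ≤ ∑ j ∈ Finset.Ico ((i : ℕ) + 1) (n + 1), ‖v j‖ := norm_sum_le _ _
    have h2 : ∑ j ∈ Finset.Ico ((i : ℕ) + 1) (n + 1), ‖v j‖ ≤ S := by
      apply Finset.sum_le_sum_of_subset_of_nonneg
      · apply Finset.Ico_subset_Ico (by omega) (le_refl _)
      · intro j _ _; exact norm_nonneg _
    have := h1.trans h2
    exact mul_le_mul_of_nonneg_left this (le_of_lt hη0)
  -- rewrite the difference
  have hPrw : gradient P (x (n + 1))
      = (1 / (n : ℝ)) • ∑ i : Fin n, gradient (f (σ i)) (x (n + 1)) := by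
    rw [Equiv.sum_comp σ (fun i => gradient (f i) (x (n + 1))), hgradPsum, smul_smul]
    rw [one_div, inv_mul_cancel₀ (ne_of_gt hn0), one_smul]
  have hdiff : g' - gradient P (x (n + 1))
      = (1 / (n : ℝ)) • ∑ i : Fin n,
          (gradient (f (σ i)) (x ((i : ℕ) + 1)) - gradient (f (σ i)) (x (n + 1))) := by
    rw [hg', hPrw, ← smul_sub, ← Finset.sum_sub_distrib]
  -- norm bound
  have hterm : ∀ i : Fin n,
      ‖gradient (f (σ i)) (x ((i : ℕ) + 1)) - gradient (f (σ i)) (x (n + 1))‖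
        ≤ (L + δ / 2) * (η * S) := by
    intro i
    have hsplit : gradient (f (σ i)) (x ((i : ℕ) + 1)) - gradient (f (σ i)) (x (n + 1))
        = ((gradient (f (σ i)) (x ((i : ℕ) + 1)) - gradient P (x ((i : ℕ) + 1)))
            - (gradient (f (σ i)) (x (n + 1)) - gradient P (x (n + 1))))
          + (gradient P (x ((i : ℕ) + 1)) - gradient P (x (n + 1))) := by abel
    rw [hsplit]
    refine (norm_add_le _ _).trans ?_
    have h1 := hsim (σ i) (x ((i : ℕ) + 1)) (x (n + 1))
    have h2 := hPl (x ((i : ℕ) + 1)) (x (n + 1))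
    have h3 := hdist i
    have hnn : 0 ≤ ‖x ((i : ℕ) + 1) - x (n + 1)‖ := norm_nonneg _
    nlinarith [h1, h2, h3, mul_le_mul_of_nonneg_left h3 (le_of_lt hL),
      mul_le_mul_of_nonneg_left h3 (by positivity : (0:ℝ) ≤ δ / 2)]
  have hnorm : ‖g' - gradient P (x (n + 1))‖ ≤ (L + δ / 2) * (η * S) := by
    rw [hdiff, norm_smul, Real.norm_eq_abs, abs_of_pos (by positivity : (0:ℝ) < 1 / (n : ℝ))]
    have h1 : ‖∑ i : Fin n, (gradient (f (σ i)) (x ((i : ℕ) + 1)) - gradient (f (σ i)) (x (n + 1)))‖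
        ≤ ∑ _i : Fin n, (L + δ / 2) * (η * S) :=
      norm_sum_le_of_le _ (fun i _ => hterm i)
    rw [Finset.sum_const, Finset.card_univ, Fintype.card_fin, nsmul_eq_mul] at h1
    calc 1 / (n : ℝ) * ‖∑ i : Fin n, (gradient (f (σ i)) (x ((i : ℕ) + 1)) - gradient (f (σ i)) (x (n + 1)))‖
        ≤ 1 / (n : ℝ) * ((n : ℝ) * ((L + δ / 2) * (η * S))) :=
          mul_le_mul_of_nonneg_left h1 (by positivity)
      _ = (L + δ / 2) * (η * S) := by field_simp
  -- final squaring
  have hcoef : η * (L + δ / 2) ≤ 3 / (16 * (n : ℝ)) := by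
    have h1 : η * L ≤ 1 / (8 * (n : ℝ)) := by
      rw [le_div_iff₀ (by positivity)]; nlinarith
    have h2 : η * δ ≤ 1 / (8 * (n : ℝ) ^ 2) := by
      rw [le_div_iff₀ (by positivity)]; nlinarith
    have h3 : 1 / (8 * (n : ℝ) ^ 2) ≤ 1 / (8 * (n : ℝ)) := by
      apply div_le_div_of_nonneg_left (by norm_num) (by positivity)
      nlinarith
    have : η * (L + δ / 2) = η * L + (η * δ) / 2 := by ring
    rw [this]
    calc η * L + (η * δ) / 2 ≤ 1 / (8 * (n : ℝ)) + (1 / (8 * (n : ℝ))) / 2 := by linarith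
      _ = 3 / (16 * (n : ℝ)) := by field_simp; ring
  have hnormnn : 0 ≤ ‖g' - gradient P (x (n + 1))‖ := norm_nonneg _
  have hsq : ‖g' - gradient P (x (n + 1))‖ ^ 2 ≤ (η * (L + δ / 2)) ^ 2 * S ^ 2 := by
    have h1 : ‖g' - gradient P (x (n + 1))‖ ≤ (η * (L + δ / 2)) * S := by
      calc ‖g' - gradient P (x (n + 1))‖ ≤ (L + δ / 2) * (η * S) := hnorm
        _ = (η * (L + δ / 2)) * S := by ring
    nlinarith [h1, mul_nonneg (mul_nonneg (le_of_lt hη0) (by positivity : (0:ℝ) ≤ L + δ / 2)) hSnn]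
  have hc2 : (η * (L + δ / 2)) ^ 2 ≤ 9 / (256 * (n : ℝ) ^ 2) := by
    have h0 : 0 ≤ η * (L + δ / 2) := by positivity
    have h3 : (3 / (16 * (n : ℝ))) ^ 2 = 9 / (256 * (n : ℝ) ^ 2) := by
      field_simp; ring
    nlinarith [hcoef, h0]
  calc ‖g' - gradient P (x (n + 1))‖ ^ 2 ≤ (η * (L + δ / 2)) ^ 2 * S ^ 2 := hsq
    _ ≤ (9 / (256 * (n : ℝ) ^ 2)) * ((n : ℝ) * D) := by
        apply mul_le_mul hc2 hS2 (sq_nonneg _) (by positivity)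
    _ = (9 / (256 * (n : ℝ))) * D := by field_simp

-- ===== i.lean =====






lemma exp_quarter_le : Real.exp (1 / 4) ≤ 4 / 3 := by
  have h1 : Real.exp (1 / 4) ^ 4 = Real.exp 1 := by
    rw [← Real.exp_nat_mul]
    norm_num
  have h2 : Real.exp 1 < 2.7182818286 := Real.exp_one_lt_d9
  have h3 : (0 : ℝ) < Real.exp (1 / 4) := Real.exp_pos _
  by_contra hcon
  push_neg at hcon
  have h4 : (4 / 3 : ℝ) ^ 4 < Real.exp (1 / 4) ^ 4 := by
    apply pow_lt_pow_left₀ hcon (by norm_num)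
    norm_num
  rw [h1] at h4
  norm_num at h4
  linarith

lemma v_growth (hn : 1 ≤ n)
    (f : Fin n → E → ℝ) (L η : ℝ) (hL : 0 < L) (hη0 : 0 < η)
    (hηL : η * L * (n : ℝ) ≤ 1 / 8)
    (hLip : ∀ i w₁ w₂, ‖gradient (f i) w₁ - gradient (f i) w₂‖ ≤ L * ‖w₁ - w₂‖)
    (x v : ℕ → E) (σ : Fin n → Fin n)
    (hx : ∀ t, t ≤ n → x (t + 1) = x t - η • v t)
    (hv : ∀ (t : ℕ) (h : t < n), v (t + 1)
      = v t + gradient (f (σ ⟨t, h⟩)) (x (t + 1)) - gradient (f (σ ⟨t, h⟩)) (x t)) :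
    ∑ t ∈ Finset.range (n + 1), ‖v t‖ ^ 2 ≤ (4 / 3) * ((n : ℝ) + 1) * ‖v 0‖ ^ 2 := by
  have hn0 : (0 : ℝ) < (n : ℝ) := by exact_mod_cast hn
  have hgrow : ∀ t, t ≤ n → ‖v t‖ ≤ (1 + η * L) ^ t * ‖v 0‖ := by
    intro t
    induction t with
    | zero => intro _; simp
    | succ t ih =>
      intro ht
      have ht' : t < n := by omega
      have h1 := ih (by omega)
      have hrec := hv t ht'
      have hstep : ‖v (t + 1)‖ ≤ ‖v t‖ + L * ‖x (t + 1) - x t‖ := by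
        rw [hrec]
        have : v t + gradient (f (σ ⟨t, ht'⟩)) (x (t + 1)) - gradient (f (σ ⟨t, ht'⟩)) (x t)
            = v t + (gradient (f (σ ⟨t, ht'⟩)) (x (t + 1)) - gradient (f (σ ⟨t, ht'⟩)) (x t)) := by
          abel
        rw [this]
        refine (norm_add_le _ _).trans ?_
        have := hLip (σ ⟨t, ht'⟩) (x (t + 1)) (x t)
        linarith
      have hxd : x (t + 1) - x t = -(η • v t) := by rw [hx t (by omega)]; abel
      rw [hxd, norm_neg, norm_smul, Real.norm_eq_abs, abs_of_pos hη0] at hstep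
      have h2 : ‖v (t + 1)‖ ≤ (1 + η * L) * ‖v t‖ := by nlinarith [hstep]
      calc ‖v (t + 1)‖ ≤ (1 + η * L) * ‖v t‖ := h2
        _ ≤ (1 + η * L) * ((1 + η * L) ^ t * ‖v 0‖) := by
            apply mul_le_mul_of_nonneg_left h1 (by positivity)
        _ = (1 + η * L) ^ (t + 1) * ‖v 0‖ := by ring
  have hpow : ∀ t, t ≤ n → ((1 + η * L) ^ t) ^ 2 ≤ 4 / 3 := by
    intro t ht
    have h0 : (0:ℝ) ≤ 1 + η * L := by positivity
    have h1 : ((1 + η * L) ^ t) ^ 2 = (1 + η * L) ^ (2 * t) := by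
      rw [← pow_mul]; ring_nf
    rw [h1]
    have h2 : (1 + η * L) ^ (2 * t) ≤ Real.exp (η * L) ^ (2 * t) := by
      apply pow_le_pow_left₀ h0
      exact Real.add_one_le_exp (η * L) |>.trans_eq' (by ring)
    have h3 : Real.exp (η * L) ^ (2 * t) = Real.exp ((2 * t : ℕ) * (η * L)) := by
      rw [Real.exp_nat_mul]
    have h4 : ((2 * t : ℕ) : ℝ) * (η * L) ≤ 1 / 4 := by
      have htn : ((t : ℕ) : ℝ) ≤ (n : ℝ) := by exact_mod_cast ht
      have hηL0 : 0 ≤ η * L := by positivity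
      have : ((2 * t : ℕ) : ℝ) = 2 * (t : ℝ) := by push_cast; ring
      rw [this]
      have h5 : 2 * (t : ℝ) * (η * L) ≤ 2 * (n : ℝ) * (η * L) := by nlinarith
      nlinarith
    calc (1 + η * L) ^ (2 * t) ≤ Real.exp (η * L) ^ (2 * t) := h2
      _ = Real.exp ((2 * t : ℕ) * (η * L)) := h3
      _ ≤ Real.exp (1 / 4) := Real.exp_le_exp.mpr h4
      _ ≤ 4 / 3 := exp_quarter_le
  have hterm : ∀ t ∈ Finset.range (n + 1), ‖v t‖ ^ 2 ≤ (4 / 3) * ‖v 0‖ ^ 2 := by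
    intro t ht
    have htn : t ≤ n := by have := Finset.mem_range.mp ht; omega
    have h1 := hgrow t htn
    have h2 := hpow t htn
    have hnn : 0 ≤ (1 + η * L) ^ t * ‖v 0‖ := by positivity
    nlinarith [h1, h2, norm_nonneg (v t), norm_nonneg (v 0), sq_nonneg ((1 + η * L) ^ t), sq_nonneg (‖v 0‖)]
  calc ∑ t ∈ Finset.range (n + 1), ‖v t‖ ^ 2
      ≤ ∑ _t ∈ Finset.range (n + 1), (4 / 3) * ‖v 0‖ ^ 2 := Finset.sum_le_sum hterm
    _ = (4 / 3) * ((n : ℝ) + 1) * ‖v 0‖ ^ 2 := by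
        rw [Finset.sum_const, Finset.card_range, nsmul_eq_mul]
        push_cast
        ring

-- ===== j.lean =====



lemma numB (η ρ N Ds : ℝ) (hη : 0 < η) (hD : 0 ≤ Ds) (hN : 1 ≤ N)
    (hρ0 : 0 ≤ ρ) (hρ : ρ ≤ 1 / 8) :
    (4 / 7) * η * (N + 1) * ((9 / (256 * N)) * Ds) ≤ (1 - ρ) * ((3 / 64) * η * Ds) := by
  have hN0 : (0:ℝ) < N := by linarith
  have heq : (4 / 7) * η * (N + 1) * ((9 / (256 * N)) * Ds)
      = (9 / 448) * (((N + 1) / N) * (η * Ds)) := by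
    field_simp
    ring
  have h2 : (N + 1) / N ≤ 2 := by
    rw [div_le_iff₀ hN0]; linarith
  have hηD : 0 ≤ η * Ds := mul_nonneg (le_of_lt hη) hD
  have h3 := mul_le_mul_of_nonneg_right h2 hηD
  rw [heq]
  nlinarith [h3, hηD]




theorem shuffled_sarah_iteration_complexity'
    (hd : 1 ≤ d) (hn : 1 ≤ n)
    (f : Fin n → EuclideanSpace ℝ (Fin d) → ℝ)
    (P : EuclideanSpace ℝ (Fin d) → ℝ)
    (hP : ∀ w, P w = (1 / (n : ℝ)) * ∑ i, f i w)
    (L μ δ η : ℝ) (hL : 0 < L) (hμ : 0 < μ) (hδ : 0 < δ)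
    (hdiff : ∀ i, Differentiable ℝ (f i))
    (hconv : ∀ i, ConvexOn ℝ Set.univ (f i))
    (hLip : ∀ i w₁ w₂, ‖gradient (f i) w₁ - gradient (f i) w₂‖ ≤ L * ‖w₁ - w₂‖)
    (hsc : StrongConvexOn Set.univ μ P)
    (wstar : EuclideanSpace ℝ (Fin d)) (hmin : IsMinOn P Set.univ wstar)
    (Pstar : ℝ) (hPstar : Pstar = P wstar)
    (hsim : ∀ i w₁ w₂,
      ‖(gradient (f i) w₁ - gradient P w₁) - (gradient (f i) w₂ - gradient P w₂)‖
        ≤ (δ / 2) * ‖w₁ - w₂‖)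
    (hη0 : 0 < η)
    (hη : η ≤ min (1 / (8 * n * L)) (1 / (8 * n ^ 2 * δ)))
    (π : ℕ → Equiv.Perm (Fin n))
    (w v : ℕ → EuclideanSpace ℝ (Fin d))
    (W V : ℕ → ℕ → EuclideanSpace ℝ (Fin d))
    (hW0 : ∀ s, W s 0 = w s) (hV0 : ∀ s, V s 0 = v s)
    (hWrec : ∀ s, ∀ i : Fin n, W s ((i : ℕ) + 1) = W s i - η • V s i)
    (hVrec : ∀ s, ∀ i : Fin n, V s ((i : ℕ) + 1)
      = V s i + gradient (f (π s i)) (W s ((i : ℕ) + 1)) - gradient (f (π s i)) (W s i))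
    (hwnext : ∀ s, w (s + 1) = W s n - η • V s n)
    (hvnext : ∀ s, v (s + 1)
      = (1 / (n : ℝ)) • ∑ i : Fin n, gradient (f (π s i)) (W s ((i : ℕ) + 1)))
    (Φ : ℝ) (hΦ : Φ = P (w 1) - Pstar + (η * ((n : ℝ) + 1) / 16) * ‖v 0‖ ^ 2)
    (hΦpos : 0 < Φ) (ε : ℝ) (hε : 0 < ε) :
    ∀ S : ℕ,
      1 + (2 / (η * μ * ((n : ℝ) + 1))) * max 0 (Real.log (Φ / ε)) ≤ (S : ℝ) →
      P (w S) - Pstar ≤ ε := by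
  have hn0 : (0 : ℝ) < (n : ℝ) := by exact_mod_cast hn
  have hn1 : (1 : ℝ) ≤ (n : ℝ) := by exact_mod_cast hn
  -- analytic facts about P
  have hPd : Differentiable ℝ P := P_diff f P hP hdiff
  have hPl : ∀ x y : E, ‖gradient P x - gradient P y‖ ≤ L * ‖x - y‖ :=
    gradP_lip hn f P hP hdiff L hLip
  have hdesc : ∀ x y : E, P y ≤ P x + ⟪gradient P x, y - x⟫ + L * ‖y - x‖ ^ 2 :=
    descent_lemma P hPd L (le_of_lt hL) hPl
  have hPL : ∀ x : E, 2 * μ * (P x - Pstar) ≤ ‖gradient P x‖ ^ 2 := by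
    intro x
    rw [hPstar]
    exact PL_ineq P hPd μ hμ hsc wstar hmin x
  have hPmin : ∀ x : E, Pstar ≤ P x := by
    intro x
    rw [hPstar]
    exact hmin (Set.mem_univ x)
  have hμL : μ ≤ L := mu_le_L hd P hPd μ L hμ hsc hPl
  have hgradPsum : ∀ y : E, ∑ i, gradient (f i) y = (n : ℝ) • gradient P y := by
    intro y
    rw [(gradient_avg_sum f P hP hdiff y).gradient, smul_smul]
    rw [show (n : ℝ) * (1 / (n : ℝ)) = 1 by field_simp, one_smul]
  -- step size bounds
  have hη1 : η ≤ 1 / (8 * n * L) := le_trans hη (min_le_left _ _)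
  have hη2 : η ≤ 1 / (8 * n ^ 2 * δ) := le_trans hη (min_le_right _ _)
  have hηL : η * L * (n : ℝ) ≤ 1 / 8 := by
    have h1 : η * (8 * (n : ℝ) * L) ≤ 1 := by
      rw [← le_div_iff₀ (by positivity)]
      exact hη1
    nlinarith [h1]
  have hηδ : η * δ * (n : ℝ) ^ 2 ≤ 1 / 8 := by
    have h1 : η * (8 * (n : ℝ) ^ 2 * δ) ≤ 1 := by
      rw [← le_div_iff₀ (by positivity)]
      exact hη2
    nlinarith [h1]
  have hημn : η * μ * (n : ℝ) ≤ 1 / 8 := by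
    have h1 : η * μ ≤ η * L := mul_le_mul_of_nonneg_left hμL (le_of_lt hη0)
    have h2 := mul_le_mul_of_nonneg_right h1 (le_of_lt hn0)
    linarith
  -- the contraction rate
  set ρ : ℝ := η * μ * ((n : ℝ) + 1) / 2 with hρdef
  have hρ0 : 0 < ρ := by positivity
  have hρ18 : ρ ≤ 1 / 8 := by
    have h1 : (n : ℝ) + 1 ≤ 2 * (n : ℝ) := by linarith
    have h2 : η * μ * ((n : ℝ) + 1) ≤ η * μ * (2 * (n : ℝ)) :=
      mul_le_mul_of_nonneg_left h1 (by positivity)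
    simp only [hρdef]
    nlinarith [h2, hημn]
  -- extended inner sequences
  set xs : ℕ → ℕ → E := fun s t => if t ≤ n then W s t else w (s + 1) with hxs
  have hxs0 : ∀ s, xs s 0 = w s := by
    intro s
    simp only [hxs]
    rw [if_pos (Nat.zero_le n), hW0]
  have hxsn1 : ∀ s, xs s (n + 1) = w (s + 1) := by
    intro s
    simp only [hxs]
    rw [if_neg (by omega)]
  have hxsmid : ∀ s t, t ≤ n → xs s t = W s t := by
    intro s t ht
    simp only [hxs]
    rw [if_pos ht]
  have hxsrec : ∀ s, ∀ t, t ≤ n → xs s (t + 1) = xs s t - η • V s t := by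
    intro s t ht
    rcases Nat.lt_or_ge t n with hlt | hge
    · rw [hxsmid s (t + 1) (by omega), hxsmid s t ht]
      have := hWrec s ⟨t, hlt⟩
      simpa using this
    · have htn : t = n := by omega
      subst htn
      rw [hxsn1 s, hxsmid s t (le_refl _), hwnext s]
  have hvsrec : ∀ s, ∀ (t : ℕ) (h : t < n), V s (t + 1)
      = V s t + gradient (f (π s ⟨t, h⟩)) (xs s (t + 1)) - gradient (f (π s ⟨t, h⟩)) (xs s t) := by
    intro s t h
    rw [hxsmid s (t + 1) (by omega), hxsmid s t (by omega)]
    have := hVrec s ⟨t, h⟩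
    simpa using this
  -- epoch quantities
  set Ds : ℕ → ℝ := fun s => ∑ t ∈ Finset.range (n + 1), ‖V s t‖ ^ 2 with hDs
  have hDsnn : ∀ s, 0 ≤ Ds s := by
    intro s
    apply Finset.sum_nonneg
    intro t _
    positivity
  set G : ℕ → ℝ := fun s => P (w (s + 1)) - Pstar + (3 / 64) * η * Ds s with hG
  -- Key A : epoch descent
  have keyA : ∀ s : ℕ, P (w (s + 1)) - Pstar
      ≤ (1 - ρ) * (P (w s) - Pstar)
        + (4 / 7) * η * ((n : ℝ) + 1) * ‖v s - gradient P (w s)‖ ^ 2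
        - (19 / 64) * η * Ds s := by
    intro s
    have h := epoch_bound hn f P Pstar L μ δ η hL hμ hδ hη0 hμL hηL hηδ hPd hdesc hPL hPmin
      hsim (xs s) (V s) (fun i => π s i) (hxsrec s) (hvsrec s)
      (‖v s - gradient P (w s)‖ ^ 2) (by rw [hV0, hxs0])
    rw [hxsn1 s, hxs0 s] at h
    exact h
  -- Key B : next-epoch gradient error
  have keyB : ∀ s : ℕ, ‖v (s + 1) - gradient P (w (s + 1))‖ ^ 2
      ≤ (9 / (256 * (n : ℝ))) * Ds s := by
    intro s
    have hg' : v (s + 1) = (1 / (n : ℝ)) • ∑ i : Fin n, gradient (f ((π s) i)) (xs s ((i : ℕ) + 1)) := by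
      rw [hvnext s]
      congr 1
      apply Finset.sum_congr rfl
      intro i _
      rw [hxsmid s ((i : ℕ) + 1) (by omega)]
    have h := epoch_next_error hn f P L δ η hL hδ hη0 hηL hηδ hPl hgradPsum hsim
      (xs s) (V s) (π s) (hxsrec s) (v (s + 1)) hg'
    rw [hxsn1 s] at h
    exact h
  -- contraction of the Lyapunov function
  have hcontr : ∀ s : ℕ, G (s + 1) ≤ (1 - ρ) * G s := by
    intro s
    have hA := keyA (s + 1)
    have hB := keyB s
    have hnum : (4 / 7) * η * ((n : ℝ) + 1) * ‖v (s + 1) - gradient P (w (s + 1))‖ ^ 2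
        ≤ (1 - ρ) * ((3 / 64) * η * Ds s) := by
      have h1 : (4 / 7) * η * ((n : ℝ) + 1) * ‖v (s + 1) - gradient P (w (s + 1))‖ ^ 2
          ≤ (4 / 7) * η * ((n : ℝ) + 1) * ((9 / (256 * (n : ℝ))) * Ds s) := by
        apply mul_le_mul_of_nonneg_left hB (by positivity)
      exact h1.trans (numB η ρ (n : ℝ) (Ds s) hη0 (hDsnn s) hn1 (le_of_lt hρ0) hρ18)
    have hDpos : 0 ≤ (19 / 64) * η * Ds (s + 1) - (3 / 64) * η * Ds (s + 1) := by
      have := mul_nonneg (le_of_lt hη0) (hDsnn (s + 1))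
      nlinarith [this]
    simp only [hG]
    linarith [hA, hnum, hDpos]
  -- base case
  have hG0 : G 0 ≤ Φ := by
    have hgrowth := v_growth hn f L η hL hη0 hηL hLip (xs 0) (V 0) (fun i => π 0 i)
      (hxsrec 0) (hvsrec 0)
    have hv00 : V 0 0 = v 0 := hV0 0
    rw [hv00] at hgrowth
    simp only [hG, hΦ]
    have h1 : (3 / 64) * η * Ds 0 ≤ (3 / 64) * η * ((4 / 3) * ((n : ℝ) + 1) * ‖v 0‖ ^ 2) :=
      mul_le_mul_of_nonneg_left hgrowth (by positivity)
    have h2 : (3 / 64) * η * ((4 / 3) * ((n : ℝ) + 1) * ‖v 0‖ ^ 2)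
        = (η * ((n : ℝ) + 1) / 16) * ‖v 0‖ ^ 2 := by ring
    linarith [h1, h2.le]
  -- geometric decay
  have hgeo : ∀ s : ℕ, G s ≤ (1 - ρ) ^ s * Φ := by
    intro s
    induction s with
    | zero => simpa using hG0
    | succ s ih =>
      have h1 := hcontr s
      have h2 : (1 - ρ) * G s ≤ (1 - ρ) * ((1 - ρ) ^ s * Φ) :=
        mul_le_mul_of_nonneg_left ih (by linarith)
      calc G (s + 1) ≤ (1 - ρ) * G s := h1
        _ ≤ (1 - ρ) * ((1 - ρ) ^ s * Φ) := h2
        _ = (1 - ρ) ^ (s + 1) * Φ := by ring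
  -- conclusion
  intro S hS
  have hmax0 : 0 ≤ max 0 (Real.log (Φ / ε)) := le_max_left _ _
  have hcoefpos : 0 < 2 / (η * μ * ((n : ℝ) + 1)) := by positivity
  have hS1 : (1 : ℝ) ≤ (S : ℝ) := by nlinarith [hS, mul_nonneg (le_of_lt hcoefpos) hmax0]
  have hS1' : 1 ≤ S := by exact_mod_cast hS1
  set m : ℕ := S - 1 with hm
  have hmS : S = m + 1 := by omega
  have hmcast : (m : ℝ) = (S : ℝ) - 1 := by
    rw [hm]
    push_cast [Nat.cast_sub hS1']
    ring
  have hwS : P (w S) - Pstar ≤ G m := by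
    rw [hmS]
    simp only [hG]
    have := mul_nonneg (mul_nonneg (by norm_num : (0:ℝ) ≤ 3/64) (le_of_lt hη0)) (hDsnn m)
    nlinarith [this]
  have hfin : G m ≤ (1 - ρ) ^ m * Φ := hgeo m
  -- bound (1-ρ)^m * Φ ≤ ε
  have h1ρ0 : 0 ≤ 1 - ρ := by linarith
  have h1ρ1 : 1 - ρ ≤ 1 := by linarith
  have hmain : (1 - ρ) ^ m * Φ ≤ ε := by
    rcases le_or_gt (Real.log (Φ / ε)) 0 with hlog | hlog
    · -- Φ ≤ ε case
      have hΦε : Φ / ε ≤ 1 := by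
        by_contra hcon
        push_neg at hcon
        have := Real.log_pos hcon
        linarith
      have hΦle : Φ ≤ ε := by
        rw [div_le_one hε] at hΦε
        exact hΦε
      have hpow : (1 - ρ) ^ m ≤ 1 := pow_le_one₀ h1ρ0 h1ρ1
      nlinarith [hpow, hΦpos.le, pow_nonneg h1ρ0 m]
    · -- log case
      have hmaxeq : max 0 (Real.log (Φ / ε)) = Real.log (Φ / ε) :=
        max_eq_right (le_of_lt hlog)
      rw [hmaxeq] at hS
      have hρm : Real.log (Φ / ε) ≤ ρ * (m : ℝ) := by
        have hc : 2 / (η * μ * ((n : ℝ) + 1)) = 1 / ρ := by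
          rw [hρdef]
          field_simp
        rw [hc] at hS
        have h2 : (1 / ρ) * Real.log (Φ / ε) ≤ (m : ℝ) := by
          rw [hmcast]; linarith
        have h3 := mul_le_mul_of_nonneg_left h2 (le_of_lt hρ0)
        calc Real.log (Φ / ε) = ρ * ((1 / ρ) * Real.log (Φ / ε)) := by
              field_simp
          _ ≤ ρ * (m : ℝ) := h3
      have hexp1 : (1 - ρ) ^ m ≤ Real.exp (-ρ) ^ m := by
        apply pow_le_pow_left₀ h1ρ0
        have := Real.add_one_le_exp (-ρ)
        linarith
      have hexp2 : Real.exp (-ρ) ^ m = Real.exp ((m : ℝ) * (-ρ)) := by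
        rw [Real.exp_nat_mul]
      have hexp3 : Real.exp ((m : ℝ) * (-ρ)) ≤ Real.exp (-Real.log (Φ / ε)) := by
        apply Real.exp_le_exp.mpr
        nlinarith [hρm]
      have hexp4 : Real.exp (-Real.log (Φ / ε)) = ε / Φ := by
        rw [Real.exp_neg, Real.exp_log (by positivity)]
        field_simp
      have hfin2 : (1 - ρ) ^ m ≤ ε / Φ := by
        rw [hexp4] at hexp3
        calc (1 - ρ) ^ m ≤ Real.exp (-ρ) ^ m := hexp1
          _ = Real.exp ((m : ℝ) * (-ρ)) := hexp2
          _ ≤ ε / Φ := hexp3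
      have := mul_le_mul_of_nonneg_right hfin2 hΦpos.le
      calc (1 - ρ) ^ m * Φ ≤ (ε / Φ) * Φ := this
        _ = ε := by field_simp
  linarith [hwS, hfin, hmain]


/-- Corollary 1, iteration-complexity form, for Shuffled-SARAH. -/
theorem shuffled_sarah_iteration_complexity
    {d n : ℕ} (hd : 1 ≤ d) (hn : 1 ≤ n)
    (f : Fin n → EuclideanSpace ℝ (Fin d) → ℝ)
    (P : EuclideanSpace ℝ (Fin d) → ℝ)
    (hP : ∀ w, P w = (1 / (n : ℝ)) * ∑ i, f i w)
    (L μ δ η : ℝ) (hL : 0 < L) (hμ : 0 < μ) (hδ : 0 < δ)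
    (hdiff : ∀ i, Differentiable ℝ (f i))
    (hconv : ∀ i, ConvexOn ℝ Set.univ (f i))
    (hLip : ∀ i w₁ w₂, ‖gradient (f i) w₁ - gradient (f i) w₂‖ ≤ L * ‖w₁ - w₂‖)
    (hsc : StrongConvexOn Set.univ μ P)
    (wstar : EuclideanSpace ℝ (Fin d)) (hmin : IsMinOn P Set.univ wstar)
    (Pstar : ℝ) (hPstar : Pstar = P wstar)
    (hsim : ∀ i w₁ w₂,
      ‖(gradient (f i) w₁ - gradient P w₁) - (gradient (f i) w₂ - gradient P w₂)‖
        ≤ (δ / 2) * ‖w₁ - w₂‖)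
    (hη0 : 0 < η)
    (hη : η ≤ min (1 / (8 * n * L)) (1 / (8 * n ^ 2 * δ)))
    -- the Shuffled-SARAH trajectory
    (π : ℕ → Equiv.Perm (Fin n))
    (w v : ℕ → EuclideanSpace ℝ (Fin d))
    (W V : ℕ → ℕ → EuclideanSpace ℝ (Fin d))
    (hW0 : ∀ s, W s 0 = w s) (hV0 : ∀ s, V s 0 = v s)
    (hWrec : ∀ s, ∀ i : Fin n, W s ((i : ℕ) + 1) = W s i - η • V s i)
    (hVrec : ∀ s, ∀ i : Fin n, V s ((i : ℕ) + 1)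
      = V s i + gradient (f (π s i)) (W s ((i : ℕ) + 1)) - gradient (f (π s i)) (W s i))
    (hwnext : ∀ s, w (s + 1) = W s n - η • V s n)
    (hvnext : ∀ s, v (s + 1)
      = (1 / (n : ℝ)) • ∑ i : Fin n, gradient (f (π s i)) (W s ((i : ℕ) + 1)))
    (Φ : ℝ) (hΦ : Φ = P (w 1) - Pstar + (η * ((n : ℝ) + 1) / 16) * ‖v 0‖ ^ 2)
    (hΦpos : 0 < Φ) (ε : ℝ) (hε : 0 < ε) :
    ∀ S : ℕ,
      1 + (2 / (η * μ * ((n : ℝ) + 1))) * max 0 (Real.log (Φ / ε)) ≤ (S : ℝ) →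
      P (w S) - Pstar ≤ ε :=
  shuffled_sarah_iteration_complexity' hd hn f P hP L μ δ η hL hμ hδ hdiff hconv hLip hsc
    wstar hmin Pstar hPstar hsim hη0 hη π w v W V hW0 hV0 hWrec hVrec hwnext hvnext
    Φ hΦ hΦpos ε hε
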